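/- Fix s ∈ {2, 3, 4, 6} and a real number x > 0. Define F(z) = ∑_{n=0}^∞ z^{n+x} · (1/2+x)_n (1/s+x)_n ((s−1)/s+x)_n / ((1+x)_n)³ for real z ∈ (0,1). Then, writing θ for the differential operator z·d/dz, the function F satisfies θ³F(z) − z·(θ + 1/2)(θ + 1/s)(θ + (s−1)/s)F(z) = x³·z^x for every z ∈ (0,1). -/

import Mathlib

open Real

/-- The differential operator `θ : f ↦ z·f′(z)`. -/
noncomputable def thetaOp (f : ℝ → ℝ) : ℝ → ℝ := fun z => z * deriv f z

/-- The differential operator `θ + c : f ↦ z·f′(z) + c·f(z)`. -/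
noncomputable def thetaOpShift (c : ℝ) (f : ℝ → ℝ) : ℝ → ℝ := fun z => z * deriv f z + c * f z

namespace AuxSA

/-- polynomially bounded sequences -/
def PolyBnd (a : ℕ → ℝ) : Prop := ∃ C : ℝ, ∃ d : ℕ, ∀ n : ℕ, |a n| ≤ C * ((n : ℝ) + 1) ^ d

lemma summable_np1_geom (d : ℕ) {r : ℝ} (h0 : 0 ≤ r) (h1 : r < 1) :
    Summable fun n : ℕ => ((n : ℝ) + 1) ^ d * r ^ n := by
  have key : ∀ n : ℕ, ((n : ℝ) + 1) ^ d * r ^ n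
      = ∑ j ∈ Finset.range (d + 1), (d.choose j : ℝ) * ((n : ℝ) ^ j * r ^ n) := by
    intro n
    rw [add_pow, Finset.sum_mul]
    refine Finset.sum_congr rfl fun j _ => ?_
    ring
  simp only [key]
  apply summable_sum
  intro j _
  exact (summable_pow_mul_geometric_of_norm_lt_one (R := ℝ) j
    (by rwa [Real.norm_eq_abs, abs_of_nonneg h0])).mul_left _

lemma PolyBnd.nonneg {a : ℕ → ℝ} {C : ℝ} {d : ℕ}
    (h : ∀ n : ℕ, |a n| ≤ C * ((n : ℝ) + 1) ^ d) : 0 ≤ C := by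
  have := (abs_nonneg (a 0)).trans (h 0)
  simpa using this

lemma PolyBnd.summable {a : ℕ → ℝ} (h : PolyBnd a) {z : ℝ} (hz : |z| < 1) :
    Summable fun n : ℕ => a n * z ^ n := by
  obtain ⟨C, d, hC⟩ := h
  have hC0 : 0 ≤ C := PolyBnd.nonneg hC
  have hsum : Summable fun n : ℕ => C * (((n : ℝ) + 1) ^ d * |z| ^ n) :=
    (summable_np1_geom d (abs_nonneg z) hz).mul_left C
  refine Summable.of_norm_bounded hsum fun n => ?_
  rw [norm_mul, norm_pow, Real.norm_eq_abs, Real.norm_eq_abs, ← mul_assoc]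
  exact mul_le_mul_of_nonneg_right (hC n) (pow_nonneg (abs_nonneg z) n)

lemma PolyBnd.mul_linear {a : ℕ → ℝ} (h : PolyBnd a) (t : ℝ) :
    PolyBnd fun n => ((n : ℝ) + t) * a n := by
  obtain ⟨C, d, hC⟩ := h
  have hC0 : 0 ≤ C := PolyBnd.nonneg hC
  refine ⟨(|t| + 1) * C, d + 1, fun n => ?_⟩
  have h1 : |(n : ℝ) + t| ≤ (|t| + 1) * ((n : ℝ) + 1) := by
    have := abs_add_le (n : ℝ) t
    have hn : |(n : ℝ)| = (n : ℝ) := abs_of_nonneg (Nat.cast_nonneg n)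
    have ht : 0 ≤ |t| := abs_nonneg t
    nlinarith [Nat.cast_nonneg (α := ℝ) n]
  calc |((n : ℝ) + t) * a n| = |(n : ℝ) + t| * |a n| := abs_mul _ _
    _ ≤ ((|t| + 1) * ((n : ℝ) + 1)) * (C * ((n : ℝ) + 1) ^ d) := by
        apply mul_le_mul h1 (hC n) (abs_nonneg _)
        positivity
    _ = (|t| + 1) * C * ((n : ℝ) + 1) ^ (d + 1) := by ring

lemma PolyBnd.hasDerivAt {a : ℕ → ℝ} (h : PolyBnd a) {z : ℝ} (hz : |z| < 1) :
    HasDerivAt (fun y => ∑' n : ℕ, a n * y ^ n)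
      (∑' n : ℕ, a n * ((n : ℝ) * z ^ (n - 1))) z := by
  obtain ⟨C, d, hC⟩ := h
  have hC0 : 0 ≤ C := PolyBnd.nonneg hC
  set r : ℝ := (|z| + 1) / 2 with hr
  have hr0 : 0 < r := by positivity
  have hr1 : r < 1 := by rw [hr]; linarith
  have hzr : |z| < r := by rw [hr]; linarith [abs_nonneg z]
  refine hasDerivAt_tsum_of_isPreconnected
    (u := fun n : ℕ => C / r * (((n : ℝ) + 1) ^ (d + 1) * r ^ n))
    (t := Metric.ball (0 : ℝ) r)
    (g' := fun (n : ℕ) (y : ℝ) => a n * ((n : ℝ) * y ^ (n - 1)))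
    (y₀ := 0) ?_ Metric.isOpen_ball ((convex_ball (0:ℝ) r).isPreconnected) ?_ ?_ ?_ ?_ ?_
  · exact ((summable_np1_geom (d + 1) hr0.le hr1).mul_left _)
  · intro n y _
    exact (hasDerivAt_pow n y).const_mul (a n)
  · intro n y hy
    have hyr : |y| ≤ r := by
      rw [Metric.mem_ball, Real.dist_eq, sub_zero] at hy
      exact hy.le
    rw [Real.norm_eq_abs, abs_mul, abs_mul]
    have h1 : |a n| ≤ C * ((n : ℝ) + 1) ^ d := hC n
    have h2 : |(n : ℝ)| * |y ^ (n - 1)| ≤ ((n : ℝ) + 1) * r ^ (n - 1) := by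
      rw [abs_pow]
      apply mul_le_mul _ (pow_le_pow_left₀ (abs_nonneg y) hyr _) (by positivity)
        (by positivity)
      rw [abs_of_nonneg (Nat.cast_nonneg n)]
      linarith
    calc |a n| * (|(n : ℝ)| * |y ^ (n - 1)|)
        ≤ (C * ((n : ℝ) + 1) ^ d) * (((n : ℝ) + 1) * r ^ (n - 1)) := by
          apply mul_le_mul h1 h2 (by positivity) (by positivity)
      _ = C * ((n : ℝ) + 1) ^ (d + 1) * r ^ (n - 1) := by ring
      _ ≤ C / r * (((n : ℝ) + 1) ^ (d + 1) * r ^ n) := by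
          rcases n with _ | m
          · simp only [Nat.zero_eq, Nat.cast_zero, pow_zero, mul_one, Nat.zero_sub,
              zero_add, one_pow]
            exact le_div_self hC0 hr0 hr1.le
          · simp only [Nat.succ_sub_one]
            rw [div_mul_eq_mul_div, le_div_iff₀ hr0, pow_succ]
            exact le_of_eq (by ring)
  · exact Metric.mem_ball_self hr0
  · apply PolyBnd.summable ⟨C, d, hC⟩
    norm_num
  · rwa [Metric.mem_ball, Real.dist_eq, sub_zero]

lemma mul_tsum_deriv (a : ℕ → ℝ) (z : ℝ) :
    z * ∑' n : ℕ, a n * ((n : ℝ) * z ^ (n - 1)) = ∑' n : ℕ, (n : ℝ) * a n * z ^ n := by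
  rw [← tsum_mul_left]
  congr 1
  funext n
  rcases n with _ | m
  · simp
  · push_cast
    rw [pow_succ]
    ring

/-- `z^x * (power series)` -/
noncomputable def Hf (x : ℝ) (a : ℕ → ℝ) : ℝ → ℝ := fun z => z ^ x * ∑' n : ℕ, a n * z ^ n

lemma key {x : ℝ} {a : ℕ → ℝ} (h : PolyBnd a) (t : ℝ) {z : ℝ}
    (hz0 : 0 < z) (hz1 : z < 1) :
    z * deriv (Hf x a) z + t * Hf x a z
      = Hf x (fun n => ((n : ℝ) + (x + t)) * a n) z := by
  have hz : |z| < 1 := by rw [abs_of_pos hz0]; exact hz1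
  have hd1 : HasDerivAt (fun y : ℝ => y ^ x) (x * z ^ (x - 1)) z :=
    Real.hasDerivAt_rpow_const (Or.inl hz0.ne')
  have hd2 := h.hasDerivAt hz
  have hd := hd1.mul hd2
  have hderiv : deriv (Hf x a) z
      = x * z ^ (x - 1) * (∑' n : ℕ, a n * z ^ n)
        + z ^ x * ∑' n : ℕ, a n * ((n : ℝ) * z ^ (n - 1)) := hd.deriv
  rw [Hf, hderiv]
  have hzx : z * (x * z ^ (x - 1)) = x * z ^ x := by
    rw [Real.rpow_sub_one hz0.ne']
    field_simp
  have hxt : z * (x * z ^ (x - 1) * (∑' n : ℕ, a n * z ^ n))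
      = z ^ x * (x * ∑' n : ℕ, a n * z ^ n) := by
    rw [show z * (x * z ^ (x - 1) * (∑' n : ℕ, a n * z ^ n))
        = (z * (x * z ^ (x - 1))) * (∑' n : ℕ, a n * z ^ n) by ring, hzx]
    ring
  have hth : z * (z ^ x * ∑' n : ℕ, a n * ((n : ℝ) * z ^ (n - 1)))
      = z ^ x * ∑' n : ℕ, (n : ℝ) * a n * z ^ n := by
    rw [show z * (z ^ x * ∑' n : ℕ, a n * ((n : ℝ) * z ^ (n - 1)))
        = z ^ x * (z * ∑' n : ℕ, a n * ((n : ℝ) * z ^ (n - 1))) by ring,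
      mul_tsum_deriv]
  rw [mul_add, hxt, hth, Hf]
  have s1 : Summable fun n : ℕ => (x + t) * a n * z ^ n := by
    simpa [mul_assoc] using (h.summable hz).mul_left (x + t)
  have s2 : Summable fun n : ℕ => (n : ℝ) * a n * z ^ n := by
    have := (h.mul_linear 0).summable hz
    simpa using this
  have hsplit : (∑' n : ℕ, ((n : ℝ) + (x + t)) * a n * z ^ n)
      = (∑' n : ℕ, (n : ℝ) * a n * z ^ n) + ∑' n : ℕ, (x + t) * a n * z ^ n := by
    rw [← Summable.tsum_add s2 s1]
    congr 1; funext n; ring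
  have hsum3 : (∑' n : ℕ, (x + t) * a n * z ^ n) = (x + t) * ∑' n : ℕ, a n * z ^ n := by
    rw [← tsum_mul_left]; congr 1; funext n; ring
  rw [hsplit, hsum3]
  ring

lemma stepShift {x : ℝ} {f : ℝ → ℝ} {a : ℕ → ℝ}
    (hfa : Set.EqOn f (Hf x a) (Set.Ioo 0 1)) (h : PolyBnd a) (t : ℝ) :
    Set.EqOn (thetaOpShift t f) (Hf x fun n => ((n : ℝ) + (x + t)) * a n)
      (Set.Ioo 0 1) := by
  intro z hz
  have hev : f =ᶠ[nhds z] Hf x a := hfa.eventuallyEq_of_mem (isOpen_Ioo.mem_nhds hz)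
  show z * deriv f z + t * f z = _
  rw [hev.deriv_eq, hfa hz]
  exact key h t hz.1 hz.2

lemma stepTheta {x : ℝ} {f : ℝ → ℝ} {a : ℕ → ℝ}
    (hfa : Set.EqOn f (Hf x a) (Set.Ioo 0 1)) (h : PolyBnd a) :
    Set.EqOn (thetaOp f) (Hf x fun n => ((n : ℝ) + x) * a n) (Set.Ioo 0 1) := by
  intro z hz
  have hev : f =ᶠ[nhds z] Hf x a := hfa.eventuallyEq_of_mem (isOpen_Ioo.mem_nhds hz)
  have h0 := key (x := x) h 0 hz.1 hz.2
  simp only [zero_mul, add_zero] at h0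
  show z * deriv f z = _
  rw [hev.deriv_eq]
  exact h0

noncomputable def cf (x β : ℝ) : ℕ → ℝ := fun n =>
  ((ascPochhammer ℝ n).eval (1 / 2 + x) * (ascPochhammer ℝ n).eval (β + x) *
    (ascPochhammer ℝ n).eval (1 - β + x)) / ((ascPochhammer ℝ n).eval (1 + x)) ^ 3

lemma cf_zero (x β : ℝ) : cf x β 0 = 1 := by simp [cf]

lemma cf_pos {x β : ℝ} (hx : 0 < x) (hβ0 : 0 < β) (hβ1 : β < 1) (n : ℕ) :
    0 < cf x β n := by
  have h1 := ascPochhammer_pos n (1 / 2 + x) (by linarith)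
  have h2 := ascPochhammer_pos n (β + x) (by linarith)
  have h3 := ascPochhammer_pos n (1 - β + x) (by linarith)
  have h4 := ascPochhammer_pos n (1 + x) (by linarith)
  exact div_pos (by positivity) (by positivity)

lemma cf_rec {x β : ℝ} (hx : 0 < x) (hβ0 : 0 < β) (hβ1 : β < 1) (n : ℕ) :
    ((n : ℝ) + 1 + x) ^ 3 * cf x β (n + 1)
      = ((n : ℝ) + (x + 1 / 2)) * (((n : ℝ) + (x + β)) *
          (((n : ℝ) + (x + (1 - β))) * cf x β n)) := by
  have h4 := ascPochhammer_pos n (1 + x) (by linarith : (0:ℝ) < 1 + x)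
  rw [cf, cf, ascPochhammer_succ_eval, ascPochhammer_succ_eval, ascPochhammer_succ_eval,
    ascPochhammer_succ_eval]
  field_simp
  ring

lemma cf_le_one {x β : ℝ} (hx : 0 < x) (hβ0 : 0 < β) (hβ1 : β < 1) (n : ℕ) :
    cf x β n ≤ 1 := by
  induction n with
  | zero => rw [cf_zero]
  | succ n ih =>
    have hrec := cf_rec hx hβ0 hβ1 n
    have hpos := cf_pos hx hβ0 hβ1 n
    have hn : (0:ℝ) ≤ (n : ℝ) := Nat.cast_nonneg n
    have hineq : ((n : ℝ) + (x + 1 / 2)) * (((n : ℝ) + (x + β)) * ((n : ℝ) + (x + (1 - β))))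
        ≤ ((n : ℝ) + 1 + x) ^ 3 := by
      nlinarith [sq_nonneg (β - 1 / 2), sq_nonneg ((n : ℝ) + x), sq_nonneg ((n : ℝ) + x + 1/2),
        mul_pos hx hβ0, sq_nonneg β]
    have hstep : cf x β (n + 1) ≤ cf x β n := by
      have h1 : ((n : ℝ) + 1 + x) ^ 3 * cf x β (n + 1)
          ≤ ((n : ℝ) + 1 + x) ^ 3 * cf x β n := by
        rw [hrec]
        calc ((n : ℝ) + (x + 1 / 2)) * (((n : ℝ) + (x + β)) * (((n : ℝ) + (x + (1 - β))) * cf x β n))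
            = (((n : ℝ) + (x + 1 / 2)) * (((n : ℝ) + (x + β)) * ((n : ℝ) + (x + (1 - β))))) * cf x β n := by
              ring
          _ ≤ ((n : ℝ) + 1 + x) ^ 3 * cf x β n :=
              mul_le_mul_of_nonneg_right hineq hpos.le
      exact le_of_mul_le_mul_left h1 (by positivity)
    linarith

lemma cf_polyBnd {x β : ℝ} (hx : 0 < x) (hβ0 : 0 < β) (hβ1 : β < 1) :
    PolyBnd (cf x β) := by
  refine ⟨1, 0, fun n => ?_⟩
  rw [abs_of_pos (cf_pos hx hβ0 hβ1 n)]
  simpa using cf_le_one hx hβ0 hβ1 n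

/-- shift of a sequence with `0` prepended -/
def shiftSeq (b : ℕ → ℝ) : ℕ → ℝ := fun n => match n with
  | 0 => 0
  | m + 1 => b m

lemma PolyBnd.shift {b : ℕ → ℝ} (h : PolyBnd b) : PolyBnd (shiftSeq b) := by
  obtain ⟨C, d, hC⟩ := h
  have hC0 : 0 ≤ C := PolyBnd.nonneg hC
  refine ⟨C, d, fun n => ?_⟩
  rcases n with _ | m
  · simp [shiftSeq]
    positivity
  · show |b m| ≤ _
    refine (hC m).trans ?_
    apply mul_le_mul_of_nonneg_left _ hC0
    apply pow_le_pow_left₀ (by positivity)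
    push_cast
    linarith

lemma shift_tsum {b : ℕ → ℝ} (hb : PolyBnd b) {z : ℝ} (hz : |z| < 1) :
    ∑' n : ℕ, shiftSeq b n * z ^ n = z * ∑' n : ℕ, b n * z ^ n := by
  rw [Summable.tsum_eq_zero_add (hb.shift.summable hz)]
  have h0 : shiftSeq b 0 * z ^ 0 = 0 := by simp [shiftSeq]
  rw [h0, zero_add]
  rw [← tsum_mul_left]
  congr 1
  funext n
  show b n * z ^ (n + 1) = z * (b n * z ^ n)
  rw [pow_succ]
  ring

end AuxSA

open AuxSA in
theorem stmt_0 (s : ℕ) (hs : s = 2 ∨ s = 3 ∨ s = 4 ∨ s = 6) (x : ℝ) (hx : 0 < x)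
    (F : ℝ → ℝ)
    (hF : ∀ z ∈ Set.Ioo (0 : ℝ) 1, F z =
      ∑' n : ℕ, z ^ ((n : ℝ) + x) *
        ((ascPochhammer ℝ n).eval (1 / 2 + x) * (ascPochhammer ℝ n).eval (1 / (s : ℝ) + x) *
          (ascPochhammer ℝ n).eval (((s : ℝ) - 1) / (s : ℝ) + x)) /
        ((ascPochhammer ℝ n).eval (1 + x)) ^ 3) :
    ∀ z ∈ Set.Ioo (0 : ℝ) 1,
      thetaOp (thetaOp (thetaOp F)) z -
        z * thetaOpShift (1 / 2)
              (thetaOpShift (1 / (s : ℝ)) (thetaOpShift (((s : ℝ) - 1) / (s : ℝ)) F)) z =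
        x ^ 3 * z ^ x := by
  have hs2 : (2 : ℝ) ≤ (s : ℝ) := by
    rcases hs with h | h | h | h <;> rw [h] <;> norm_num
  have hs0 : (0 : ℝ) < (s : ℝ) := by linarith
  set β : ℝ := 1 / (s : ℝ) with hβdef
  have hβ0 : 0 < β := by positivity
  have hβ1 : β < 1 := by
    rw [hβdef, div_lt_one hs0]; linarith
  have hγ : ((s : ℝ) - 1) / (s : ℝ) = 1 - β := by
    rw [hβdef]; field_simp
  rw [hγ]
  simp only [hγ] at hF
  -- coefficient sequences
  set a0 : ℕ → ℝ := cf x β with ha0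
  have pb0 : PolyBnd a0 := cf_polyBnd hx hβ0 hβ1
  set a1 : ℕ → ℝ := fun n => ((n : ℝ) + x) * a0 n with ha1
  have pb1 : PolyBnd a1 := pb0.mul_linear x
  set a2 : ℕ → ℝ := fun n => ((n : ℝ) + x) * a1 n with ha2
  have pb2 : PolyBnd a2 := pb1.mul_linear x
  set a3 : ℕ → ℝ := fun n => ((n : ℝ) + x) * a2 n with ha3
  have pb3 : PolyBnd a3 := pb2.mul_linear x
  set b1 : ℕ → ℝ := fun n => ((n : ℝ) + (x + (1 - β))) * a0 n with hb1
  have qb1 : PolyBnd b1 := pb0.mul_linear (x + (1 - β))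
  set b2 : ℕ → ℝ := fun n => ((n : ℝ) + (x + β)) * b1 n with hb2
  have qb2 : PolyBnd b2 := qb1.mul_linear (x + β)
  set b3 : ℕ → ℝ := fun n => ((n : ℝ) + (x + 1 / 2)) * b2 n with hb3
  have qb3 : PolyBnd b3 := qb2.mul_linear (x + 1 / 2)
  -- F agrees with Hf x a0 on Ioo 0 1
  have hEq0 : Set.EqOn F (Hf x a0) (Set.Ioo 0 1) := by
    intro z hz
    rw [hF z hz, Hf, ← tsum_mul_left]
    congr 1
    funext n
    have hzx : z ^ ((n : ℝ) + x) = z ^ x * z ^ n := by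
      rw [Real.rpow_add hz.1, Real.rpow_natCast]
      ring
    rw [hzx, ha0, cf]
    ring
  have hEq1 := stepTheta hEq0 pb0
  have hEq2 := stepTheta hEq1 pb1
  have hEq3 := stepTheta hEq2 pb2
  have hEqb1 := stepShift hEq0 pb0 (1 - β)
  have hEqb2 := stepShift hEqb1 qb1 β
  have hEqb3 := stepShift hEqb2 qb2 (1 / 2)
  intro z hz
  have hz0 : 0 < z := hz.1
  have hzabs : |z| < 1 := by rw [abs_of_pos hz0]; exact hz.2
  rw [hEq3 hz, hEqb3 hz]
  -- now a pure computation with power series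
  have e1 : z * Hf x b3 z = z ^ x * ∑' n : ℕ, shiftSeq b3 n * z ^ n := by
    rw [Hf, shift_tsum qb3 hzabs]
    ring
  rw [e1, Hf]
  rw [← mul_sub, ← Summable.tsum_sub (pb3.summable hzabs) (qb3.shift.summable hzabs)]
  have e2 : (∑' n : ℕ, (a3 n * z ^ n - shiftSeq b3 n * z ^ n)) = x ^ 3 := by
    have hterm : ∀ n : ℕ, n ≠ 0 → a3 n * z ^ n - shiftSeq b3 n * z ^ n = 0 := by
      intro n hn
      obtain ⟨m, rfl⟩ := Nat.exists_eq_succ_of_ne_zero hn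
      have hrec := cf_rec hx hβ0 hβ1 m
      have hcoef : a3 (m + 1) = b3 m := by
        rw [ha3, ha2, ha1, hb3, hb2, hb1, ha0]
        push_cast
        linear_combination hrec
      rw [show shiftSeq b3 (m + 1) = b3 m from rfl, hcoef]
      ring
    rw [tsum_eq_single 0 hterm]
    rw [show shiftSeq b3 0 = 0 from rfl, ha3, ha2, ha1, ha0]
    simp [cf_zero]
    ring
  rw [e2]
  ring
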